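/- Let H ∈ (1/2, 1) and 0 < z < v. Then ∫₀^z u^{1−2H} (z−u)^{H−3/2} (v−u)^{H−3/2} du = B(2−2H, H−1/2) · v^{1/2−H} z^{1/2−H} (v−z)^{2H−2}, where B denotes the Beta function. -/

import Mathlib

open Real MeasureTheory Set

lemma real_betaIntegral (a b : ℝ) (ha : 0 < a) (hb : 0 < b) :
    ∫ t in (0:ℝ)..1, t ^ (a - 1) * (1 - t) ^ (b - 1)
      = Real.Gamma a * Real.Gamma b / Real.Gamma (a + b) := by
  have hab : 0 < a + b := by linarith
  have hΓ : Real.Gamma (a + b) ≠ 0 := (Real.Gamma_pos_of_pos hab).ne'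
  have key : ((∫ t in (0:ℝ)..1, t ^ (a - 1) * (1 - t) ^ (b - 1) : ℝ) : ℂ)
      = Complex.betaIntegral a b := by
    rw [← intervalIntegral.integral_ofReal]
    unfold Complex.betaIntegral
    refine intervalIntegral.integral_congr fun x hx => ?_
    rw [Set.uIcc_of_le (by norm_num : (0:ℝ) ≤ 1)] at hx
    push_cast
    rw [Complex.ofReal_cpow hx.1, Complex.ofReal_cpow (by linarith [hx.2] : (0:ℝ) ≤ 1 - x)]
    push_cast
    ring
  have hgg := Complex.Gamma_mul_Gamma_eq_betaIntegral
    (by simpa using ha : 0 < Complex.re a) (by simpa using hb : 0 < Complex.re b)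
  rw [← key, ← Complex.ofReal_add, Complex.Gamma_ofReal, Complex.Gamma_ofReal,
    Complex.Gamma_ofReal, ← Complex.ofReal_mul, ← Complex.ofReal_mul] at hgg
  have := Complex.ofReal_injective hgg
  field_simp
  linarith [this]

theorem stmt11 (H z v : ℝ) (hH : 1 / 2 < H) (hH1 : H < 1)
    (hz : 0 < z) (hzv : z < v) :
    ∫ u in (0 : ℝ)..z, u ^ (1 - 2 * H) * (z - u) ^ (H - 3 / 2) * (v - u) ^ (H - 3 / 2)
      = (Real.Gamma (2 - 2 * H) * Real.Gamma (H - 1 / 2) / Real.Gamma (3 / 2 - H))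
        * v ^ (1 / 2 - H) * z ^ (1 / 2 - H) * (v - z) ^ (2 * H - 2) := by
  have hv : 0 < v := hz.trans hzv
  have hvz : 0 < v - z := by linarith
  set φ : ℝ → ℝ := fun t => z * v * t / (z * t + v - z) with hφdef
  set φ' : ℝ → ℝ := fun t => z * v * (v - z) / (z * t + v - z) ^ 2 with hφ'def
  have hD : ∀ t ∈ Ioo (0:ℝ) 1, 0 < z * t + v - z := by
    intro t ht; nlinarith [ht.1, ht.2]
  have hderiv : ∀ t ∈ Ioo (0:ℝ) 1, HasDerivWithinAt φ (φ' t) (Ioo 0 1) t := by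
    intro t ht
    have h0 : z * t + v - z ≠ 0 := (hD t ht).ne'
    have h1 : HasDerivAt (fun t : ℝ => z * v * t) (z * v) t := by
      simpa using (hasDerivAt_id t).const_mul (z * v)
    have h2 : HasDerivAt (fun t : ℝ => z * t + v - z) z t := by
      have := ((hasDerivAt_id t).const_mul z).add_const (v - z)
      simpa [mul_comm, add_sub_assoc] using this
    have h3 := h1.div h2 h0
    have h4 : HasDerivAt φ (φ' t) t := by
      refine h3.congr_deriv ?_
      rw [hφ'def]
      field_simp
      ring
    exact h4.hasDerivWithinAt
  have hinj : InjOn φ (Ioo 0 1) := by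
    intro a ha b hb hab
    have hDa := (hD a ha).ne'
    have hDb := (hD b hb).ne'
    rw [hφdef] at hab
    simp only at hab
    rw [div_eq_div_iff hDa hDb] at hab
    have hkey : z * v * (v - z) * (a - b) = 0 := by linear_combination hab
    have hne : z * v * (v - z) ≠ 0 := by positivity
    have := (mul_eq_zero.mp hkey).resolve_left hne
    linarith
  have himg : φ '' Ioo 0 1 = Ioo 0 z := by
    ext u
    constructor
    · rintro ⟨t, ht, rfl⟩
      have hDt := hD t ht
      constructor
      · have hnum : 0 < z * v * t := mul_pos (mul_pos hz hv) ht.1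
        exact div_pos hnum hDt
      · rw [div_lt_iff₀ hDt]
        nlinarith [mul_pos (mul_pos hz hvz) (by linarith [ht.2] : (0:ℝ) < 1 - t)]
    · rintro ⟨hu0, huz⟩
      have hvu : 0 < v - u := by linarith
      refine ⟨u * (v - z) / (z * (v - u)), ⟨?_, ?_⟩, ?_⟩
      · positivity
      · rw [div_lt_one (by positivity)]; nlinarith
      · rw [hφdef]
        simp only
        rw [div_eq_iff]
        · field_simp
          ring
        · have h1 : z * (u * (v - z) / (z * (v - u))) + v - z
              = (v - z) * v / (v - u) := by field_simp; ring
          rw [h1]; positivity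
  have hIoo : (∫ u in (0 : ℝ)..z, u ^ (1 - 2 * H) * (z - u) ^ (H - 3 / 2) * (v - u) ^ (H - 3 / 2))
      = ∫ u in Ioo (0:ℝ) z, u ^ (1 - 2 * H) * (z - u) ^ (H - 3 / 2) * (v - u) ^ (H - 3 / 2) := by
    rw [intervalIntegral.integral_of_le hz.le, MeasureTheory.integral_Ioc_eq_integral_Ioo]
  rw [hIoo, ← himg,
    MeasureTheory.integral_image_eq_integral_abs_deriv_smul measurableSet_Ioo hderiv hinj]
  have hcongr : ∀ t ∈ Ioo (0:ℝ) 1,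
      |φ' t| • (φ t ^ (1 - 2 * H) * (z - φ t) ^ (H - 3 / 2) * (v - φ t) ^ (H - 3 / 2))
      = (z ^ (1/2 - H) * v ^ (1/2 - H) * (v - z) ^ (2*H - 2))
          * (t ^ (1 - 2*H) * (1 - t) ^ (H - 3/2)) := by
    intro t ht
    have ht0 := ht.1
    have ht1 : 0 < 1 - t := by linarith [ht.2]
    have hDt := hD t ht
    set D := z * t + v - z with hDdef
    have hφ't : φ' t = z * v * (v - z) / D ^ 2 := rfl
    have hφt : φ t = z * v * t / D := rfl
    have e1 : z - φ t = z * (v - z) * (1 - t) / D := by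
      rw [hφt]; field_simp; ring
    have e2 : v - φ t = v * (v - z) / D := by
      rw [hφt]; field_simp; ring
    have split1 : (z * v * t / D) ^ (1 - 2*H)
        = z ^ (1 - 2*H) * v ^ (1 - 2*H) * t ^ (1 - 2*H) / D ^ (1 - 2*H) := by
      rw [Real.div_rpow (by positivity) hDt.le, Real.mul_rpow (by positivity) ht0.le,
        Real.mul_rpow hz.le hv.le]
    have split2 : (z * (v - z) * (1 - t) / D) ^ (H - 3/2)
        = z ^ (H - 3/2) * (v - z) ^ (H - 3/2) * (1 - t) ^ (H - 3/2) / D ^ (H - 3/2) := by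
      rw [Real.div_rpow (by positivity) hDt.le, Real.mul_rpow (by positivity) ht1.le,
        Real.mul_rpow hz.le hvz.le]
    have split3 : (v * (v - z) / D) ^ (H - 3/2)
        = v ^ (H - 3/2) * (v - z) ^ (H - 3/2) / D ^ (H - 3/2) := by
      rw [Real.div_rpow (by positivity) hDt.le, Real.mul_rpow hv.le hvz.le]
    have hDa' : D ^ (1 - 2*H) ≠ 0 := (Real.rpow_pos_of_pos hDt _).ne'
    have hDb' : D ^ (H - 3/2) ≠ 0 := (Real.rpow_pos_of_pos hDt _).ne'
    have hD2' : (D:ℝ) ^ (2:ℕ) ≠ 0 := pow_ne_zero _ hDt.ne'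
    have hzc : z ^ (1 - 2*H) * z ^ (H - 3/2) * z = z ^ (1/2 - H) := by
      rw [← Real.rpow_add hz, ← Real.rpow_add_one hz.ne']
      congr 1; ring
    have hvc : v ^ (1 - 2*H) * v ^ (H - 3/2) * v = v ^ (1/2 - H) := by
      rw [← Real.rpow_add hv, ← Real.rpow_add_one hv.ne']
      congr 1; ring
    have hwd : (v - z) ^ (H - 3/2) * ((v - z) ^ (H - 3/2) * (v - z))
        = (v - z) ^ (2*H - 2) := by
      rw [← Real.rpow_add_one hvz.ne', ← Real.rpow_add hvz]
      congr 1; ring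
    have hD1 : (D:ℝ) ^ (2:ℕ) * (D ^ (1 - 2*H) * (D ^ (H - 3/2) * D ^ (H - 3/2))) = 1 := by
      rw [← Real.rpow_natCast D 2, ← Real.rpow_add hDt, ← Real.rpow_add hDt,
        ← Real.rpow_add hDt]
      rw [show ((2:ℕ):ℝ) + (1 - 2*H + (H - 3/2 + (H - 3/2))) = 0 by push_cast; ring,
        Real.rpow_zero]
    rw [smul_eq_mul, hφ't, hφt, e1, e2, abs_of_pos (by positivity), split1, split2, split3]
    calc z * v * (v - z) / D ^ 2 *
          (z ^ (1 - 2*H) * v ^ (1 - 2*H) * t ^ (1 - 2*H) / D ^ (1 - 2*H) *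
            (z ^ (H - 3/2) * (v - z) ^ (H - 3/2) * (1 - t) ^ (H - 3/2) / D ^ (H - 3/2)) *
            (v ^ (H - 3/2) * (v - z) ^ (H - 3/2) / D ^ (H - 3/2)))
        = (z ^ (1 - 2*H) * z ^ (H - 3/2) * z) * (v ^ (1 - 2*H) * v ^ (H - 3/2) * v) *
            ((v - z) ^ (H - 3/2) * ((v - z) ^ (H - 3/2) * (v - z))) *
            (t ^ (1 - 2*H) * (1 - t) ^ (H - 3/2)) /
            ((D:ℝ) ^ (2:ℕ) * (D ^ (1 - 2*H) * (D ^ (H - 3/2) * D ^ (H - 3/2)))) := by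
          field_simp
      _ = (z ^ (1/2 - H) * v ^ (1/2 - H) * (v - z) ^ (2*H - 2))
            * (t ^ (1 - 2*H) * (1 - t) ^ (H - 3/2)) := by
          rw [hzc, hvc, hwd, hD1, div_one]
  rw [MeasureTheory.setIntegral_congr_fun measurableSet_Ioo hcongr]
  rw [MeasureTheory.integral_const_mul]
  have hbeta : (∫ t in Ioo (0:ℝ) 1, t ^ (1 - 2*H) * (1 - t) ^ (H - 3/2))
      = Real.Gamma (2 - 2*H) * Real.Gamma (H - 1/2) / Real.Gamma (3/2 - H) := by
    rw [← MeasureTheory.integral_Ioc_eq_integral_Ioo,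
      ← intervalIntegral.integral_of_le (by norm_num : (0:ℝ) ≤ 1)]
    have := real_betaIntegral (2 - 2*H) (H - 1/2) (by linarith) (by linarith)
    rw [show (2 - 2*H) + (H - 1/2) = 3/2 - H by ring] at this
    rw [← this]
    congr 1 <;> ring_nf
  rw [hbeta]
  ring
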